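/- For every x ∈ (0,1) and every 0 < ε < min{x, 1−x}, there exists an integer Cantor set C = C_{b,D} such that (1) its dimension log|D|/log b lies in [x−ε, x+ε], and (2) C is intersective with power savings of order at least x − ε (i.e., any A ⊆ [N] with (A−A) ∩ C = ∅ has |A| ≪ N^{1−(x−ε)}). -/

import Mathlib

set_option maxHeartbeats 1000000

lemma digit_sum (b n : ℕ) : ∀ t : ℕ, ∑ j ∈ Finset.range t, (n / b ^ j % b) * b ^ j = n % b ^ t := by
  intro t
  induction t with
  | zero => simp [Nat.mod_one]
  | succ t ih =>
    rw [Finset.sum_range_succ, ih, ← Nat.mod_mul_right_div_self, pow_succ]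
    have h2 : n % (b ^ t * b) % b ^ t = n % b ^ t := Nat.mod_mod_of_dvd n ⟨b, rfl⟩
    conv_lhs => rw [← h2]
    exact Nat.mod_add_div' (n % (b ^ t * b)) (b ^ t)



/-- Membership in the integer Cantor set with base `b` and digit set `D ⊆ ℤ`. -/
def IsCantorZ (b : ℕ) (D : Finset ℤ) (m : ℤ) : Prop :=
  ∃ t : ℕ, ∃ f : ℕ → ℤ, (∀ j ≤ t, f j ∈ D) ∧ m = ∑ j ∈ Finset.range (t + 1), f j * (b : ℤ) ^ j

/-- For every `x ∈ (0,1)` and `0 < ε < min{x, 1−x}` there is an integer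
Cantor set `C_{b,D}` whose dimension `log|D|/log b` lies in `[x−ε, x+ε]` and which is
intersective with power savings of order at least `x − ε`: any `A ⊆ [1, N]` whose
difference set avoids the nonzero elements of `C_{b,D}` has `|A| ≪ N^{1−(x−ε)}`. -/
theorem cantor_prescribed_dimension_power_savings
    (x ε : ℝ) (hx0 : 0 < x) (hx1 : x < 1) (hε0 : 0 < ε) (hε : ε < min x (1 - x)) :
    ∃ b : ℕ, ∃ D : Finset ℤ, 3 ≤ b ∧ 2 ≤ D.card ∧ D.card < b ∧
      (∀ d ∈ D, ∀ d' ∈ D, d % (b : ℤ) = d' % (b : ℤ) → d = d') ∧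
      x - ε ≤ Real.log (D.card : ℝ) / Real.log (b : ℝ) ∧
      Real.log (D.card : ℝ) / Real.log (b : ℝ) ≤ x + ε ∧
      ∃ c : ℝ, 0 < c ∧ ∀ N : ℕ, 1 ≤ N → ∀ A : Finset ℤ,
        (∀ a ∈ A, 1 ≤ a ∧ a ≤ (N : ℤ)) →
        (∀ a ∈ A, ∀ a' ∈ A, a ≠ a' → ¬ IsCantorZ b D (a - a')) →
        (A.card : ℝ) ≤ c * (N : ℝ) ^ ((1 : ℝ) - (x - ε)) := by
  have hεx : ε < x := lt_of_lt_of_le hε (min_le_left _ _)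
  have hε1x : ε < 1 - x := lt_of_lt_of_le hε (min_le_right _ _)
  have h1x : (0:ℝ) < 1 - x := by linarith
  set y : ℝ := max ((6:ℝ) ^ (1/ε)) ((6:ℝ) ^ (1/(1-x))) with hy
  set b : ℕ := max 3 ⌈y⌉₊ with hbdef
  have hb3 : 3 ≤ b := le_max_left _ _
  have hb0 : (0:ℝ) < (b:ℝ) := by exact_mod_cast (by omega : 0 < b)
  have hb1 : (1:ℝ) < (b:ℝ) := by exact_mod_cast (by omega : 1 < b)
  have hby : y ≤ (b:ℝ) := le_trans (Nat.le_ceil y) (by exact_mod_cast le_max_right 3 ⌈y⌉₊)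
  have key6 : ∀ u : ℝ, 0 < u → (6:ℝ) ^ (1/u) ≤ y → (6:ℝ) ≤ (b:ℝ) ^ u := by
    intro u hu h1
    calc (6:ℝ) = ((6:ℝ) ^ (1/u)) ^ u := by
          rw [← Real.rpow_mul (by norm_num : (0:ℝ) ≤ 6), one_div,
            inv_mul_cancel₀ hu.ne', Real.rpow_one]
      _ ≤ (b:ℝ) ^ u := Real.rpow_le_rpow (by positivity) (le_trans h1 hby) hu.le
  have h6ε : (6:ℝ) ≤ (b:ℝ) ^ ε := key6 ε hε0 (le_max_left _ _)
  have h6x : (6:ℝ) ≤ (b:ℝ) ^ (1-x) := key6 (1-x) h1x (le_max_right _ _)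
  set k : ℕ := ⌈(b:ℝ) ^ x⌉₊ with hkdef
  have hbx0 : (0:ℝ) < (b:ℝ) ^ x := Real.rpow_pos_of_pos hb0 x
  have hbx1 : (1:ℝ) ≤ (b:ℝ) ^ x := by
    have := (Real.rpow_le_rpow_left_iff hb1).mpr hx0.le
    rwa [Real.rpow_zero] at this
  have hk1 : 1 ≤ k := Nat.one_le_ceil_iff.mpr hbx0
  have hkl : (b:ℝ) ^ x ≤ (k:ℝ) := Nat.le_ceil _
  have hku : (k:ℝ) ≤ (b:ℝ) ^ x + 1 := (Nat.ceil_lt_add_one hbx0.le).le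
  -- main numeric facts
  have hfive : (2*(k:ℝ)+1) ≤ 5 * (b:ℝ) ^ x := by nlinarith
  have hcardR : (2*(k:ℝ)+1) < (b:ℝ) := by
    have h1 : (6:ℝ) * (b:ℝ) ^ x ≤ (b:ℝ) := by
      have : (b:ℝ) ^ (1-x) * (b:ℝ) ^ x = (b:ℝ) := by
        rw [← Real.rpow_add hb0]; norm_num
      nlinarith
    nlinarith
  have hcard_up : (2*(k:ℝ)+1) ≤ (b:ℝ) ^ (x+ε) := by
    have : (b:ℝ) ^ (x+ε) = (b:ℝ) ^ x * (b:ℝ) ^ ε := by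
      rw [← Real.rpow_add hb0]
    nlinarith
  have hkb : 2 * k + 1 < b := by exact_mod_cast (by push_cast; linarith : ((2*k+1 : ℕ):ℝ) < (b:ℝ))
  have hD : (Finset.Icc (-(k:ℤ)) (k:ℤ)).card = 2*k+1 := by rw [Int.card_Icc]; omega
  have hlogb : 0 < Real.log (b:ℝ) := Real.log_pos hb1
  have hkbZ : (2*(k:ℤ)+1) < (b:ℤ) := by exact_mod_cast hkb
  refine ⟨b, Finset.Icc (-(k:ℤ)) (k:ℤ), hb3, ?_, ?_, ?_, ?_, ?_, ?_⟩
  · rw [hD]; omega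
  · rw [hD]; exact hkb
  · intro d hd d' hd' hmod
    rw [Finset.mem_Icc] at hd hd'
    have hdvd : (b:ℤ) ∣ d' - d := Int.ModEq.dvd hmod
    have h0 : d' - d = 0 := Int.eq_zero_of_abs_lt_dvd hdvd (by rw [abs_lt]; omega)
    omega
  · rw [hD, le_div_iff₀ hlogb]
    have hlog1 : x * Real.log (b:ℝ) ≤ Real.log ((2*k+1 : ℕ) : ℝ) := by
      rw [← Real.log_rpow hb0]
      apply Real.log_le_log hbx0
      push_cast; linarith
    nlinarith
  · rw [hD, div_le_iff₀ hlogb]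
    have hlog2 : Real.log ((2*k+1 : ℕ) : ℝ) ≤ (x + ε) * Real.log (b:ℝ) := by
      rw [← Real.log_rpow hb0]
      apply Real.log_le_log (by positivity)
      push_cast; linarith
    linarith
  · set e : ℝ := (1:ℝ) - (x - ε) with hedef
    have he0 : 0 < e := by rw [hedef]; linarith
    refine ⟨(b:ℝ) ^ e, Real.rpow_pos_of_pos hb0 e, ?_⟩
    intro N hN A hA hdiff
    set t : ℕ := Nat.log b N + 1 with htdef
    have htN : N < b ^ t := Nat.lt_pow_succ_log_self (by omega) N
    have htN' : b ^ (t-1) ≤ N := by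
      simpa [htdef] using Nat.pow_log_le_self b (by omega : N ≠ 0)
    have ht1 : 1 ≤ t := by omega
    set B : ℕ := (b-1)/(k+1) + 1 with hBdef
    have hdig : ∀ m : ℕ, ∀ j : ℕ, m / b ^ j % b ≤ b - 1 := fun m j => by
      have := Nat.mod_lt (m / b ^ j) (show 0 < b by omega); omega
    set F : ℤ → (Fin t → Fin B) := fun a j =>
      ⟨(((a-1).toNat / b ^ (j:ℕ) % b : ℕ)) / (k+1),
        Nat.lt_succ_of_le (Nat.div_le_div_right (hdig _ _))⟩ with hFdef
    have hinj : Set.InjOn F A := by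
      intro a ha a' ha' hFa
      by_contra hne
      apply hdiff a ha a' ha' hne
      obtain ⟨ha1, haN⟩ := hA a ha
      obtain ⟨ha1', haN'⟩ := hA a' ha'
      have hbtZ : ((N:ℤ)) < ((b^t : ℕ) : ℤ) := by exact_mod_cast htN
      have hta : (a-1).toNat < b ^ t := by omega
      have hta' : (a'-1).toNat < b ^ t := by omega
      refine ⟨t - 1, fun j => if j < t then
          ((((a-1).toNat / b ^ j % b : ℕ)) : ℤ) - ((((a'-1).toNat / b ^ j % b : ℕ)) : ℤ)
        else 0, ?_, ?_⟩
      · intro j hj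
        have hjt : j < t := by omega
        dsimp only
        rw [if_pos hjt]
        have hbj := congrArg Fin.val (congrFun hFa ⟨j, hjt⟩)
        simp only [hFdef] at hbj
        set d := (a-1).toNat / b ^ j % b with hd
        set d' := (a'-1).toNat / b ^ j % b with hd'
        have h1 := Nat.div_add_mod d (k+1)
        have h2 := Nat.div_add_mod d' (k+1)
        rw [hbj] at h1
        obtain ⟨m, hm⟩ : ∃ m, (k+1) * (d'/(k+1)) = m := ⟨_, rfl⟩
        rw [hm] at h1 h2
        have h3 : d % (k+1) < k+1 := Nat.mod_lt _ (by omega)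
        have h4 : d' % (k+1) < k+1 := Nat.mod_lt _ (by omega)
        rw [Finset.mem_Icc]
        omega
      · have hsum : ∀ m : ℕ, m < b ^ t →
            (∑ j ∈ Finset.range t, (((m / b ^ j % b : ℕ)) : ℤ) * (b:ℤ) ^ j) = (m:ℤ) := by
          intro m hm
          have h := digit_sum b m t
          rw [Nat.mod_eq_of_lt hm] at h
          exact_mod_cast h
        rw [show t - 1 + 1 = t from by omega]
        have hcong : ∀ j ∈ Finset.range t,
            (if j < t then ((((a-1).toNat / b ^ j % b : ℕ)) : ℤ) - ((((a'-1).toNat / b ^ j % b : ℕ)) : ℤ) else 0) * (b:ℤ) ^ j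
            = ((((a-1).toNat / b ^ j % b : ℕ)) : ℤ) * (b:ℤ) ^ j - ((((a'-1).toNat / b ^ j % b : ℕ)) : ℤ) * (b:ℤ) ^ j := by
          intro j hj
          rw [if_pos (Finset.mem_range.mp hj), sub_mul]
        rw [Finset.sum_congr rfl hcong, Finset.sum_sub_distrib, hsum _ hta, hsum _ hta']
        omega
    have hcard : A.card ≤ B ^ t := by
      have h1 := Finset.card_le_card_of_injOn F (fun a _ => Finset.mem_univ (F a)) hinj
      simpa using h1
    have hknn : (0:ℝ) < (k:ℝ)+1 := by positivity
    have hB2 : (B:ℝ) ≤ (b:ℝ) ^ e := by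
      have hBle : (B:ℝ) ≤ 2*(b:ℝ)/((k:ℝ)+1) := by
        have h1 : ((((b-1)/(k+1) : ℕ)):ℝ) ≤ ((b-1 : ℕ):ℝ)/(((k+1 : ℕ)):ℝ) := Nat.cast_div_le
        have h2 : ((b-1:ℕ):ℝ) = (b:ℝ)-1 := by
          push_cast [Nat.cast_sub (by omega : 1 ≤ b)]; ring
        have h2' : (((k+1:ℕ)):ℝ) = (k:ℝ)+1 := by push_cast; ring
        rw [h2, h2'] at h1
        have hkb' : (k:ℝ) ≤ (b:ℝ) := by exact_mod_cast (by omega : k ≤ b)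
        have hBc : (B:ℝ) = ((((b-1)/(k+1) : ℕ)):ℝ) + 1 := by rw [hBdef]; push_cast; ring
        rw [hBc]
        have h5 : ((b:ℝ)-1)/((k:ℝ)+1) + 1 ≤ 2*(b:ℝ)/((k:ℝ)+1) := by
          rw [div_add' _ _ _ hknn.ne', div_le_div_iff₀ hknn hknn]
          nlinarith
        linarith
      have hk2 : 2 * (b:ℝ) ^ (x-ε) ≤ (k:ℝ)+1 := by
        have h1 : (b:ℝ)^x = (b:ℝ)^(x-ε) * (b:ℝ)^ε := by
          rw [← Real.rpow_add hb0]; ring_nf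
        nlinarith [Real.rpow_pos_of_pos hb0 (x-ε)]
      have h3 : (b:ℝ) ^ e * (b:ℝ) ^ (x-ε) = (b:ℝ) := by
        rw [← Real.rpow_add hb0]
        have : e + (x-ε) = 1 := by rw [hedef]; ring
        rw [this, Real.rpow_one]
      calc (B:ℝ) ≤ 2*(b:ℝ)/((k:ℝ)+1) := hBle
        _ ≤ (b:ℝ)^e := by
            rw [div_le_iff₀ hknn]
            nlinarith [Real.rpow_pos_of_pos hb0 e, Real.rpow_pos_of_pos hb0 (x-ε)]
    have he' : ((b:ℝ)^e)^t = (b:ℝ)^e * (((b ^ (t-1) : ℕ)):ℝ)^e := by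
      have h1 : ((b:ℝ)^e)^t = (b:ℝ)^(e * t) := by
        rw [← Real.rpow_natCast ((b:ℝ)^e) t, ← Real.rpow_mul hb0.le]
      have h2 : (((b ^ (t-1) : ℕ)):ℝ)^e = (b:ℝ)^(e * ((t-1:ℕ):ℝ)) := by
        push_cast
        rw [← Real.rpow_natCast (b:ℝ) (t-1), ← Real.rpow_mul hb0.le, mul_comm]
      have h3 : e * (t:ℝ) = e + e * ((t-1:ℕ):ℝ) := by
        have h4 : ((t-1:ℕ):ℝ) = (t:ℝ) - 1 := by
          push_cast [Nat.cast_sub ht1]; ring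
        rw [h4]; ring
      rw [h1, h2, h3, Real.rpow_add hb0]
    calc (A.card : ℝ) ≤ ((B ^ t : ℕ) : ℝ) := by exact_mod_cast hcard
      _ = (B:ℝ)^t := by push_cast; ring
      _ ≤ ((b:ℝ)^e)^t := pow_le_pow_left₀ (by positivity) hB2 t
      _ = (b:ℝ)^e * (((b ^ (t-1) : ℕ)):ℝ)^e := he'
      _ ≤ (b:ℝ)^e * (N:ℝ)^e := by
          apply mul_le_mul_of_nonneg_left _ (Real.rpow_pos_of_pos hb0 e).le
          exact Real.rpow_le_rpow (by positivity) (by exact_mod_cast htN') he0.le
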